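/- Let s > 2 and 0 < x₀, and let f : (0, x₀] → ℝ be continuously differentiable, vanishing to infinite order at 0 (i.e. f(x) = O(x^N) for all N), with all integrals below finite. Then ∫_0^{x₀} |f'(x)|² x^{−2s} dx ≥ C⁻¹ s² ∫_0^{x₀} |f(x)|² x^{−2s−2} dx for a universal constant C > 0. -/

import Mathlib

open MeasureTheory


lemma aux_key (s x₀ : ℝ) (hs : 0 < s) (hx₀ : 0 < x₀) (f : ℝ → ℝ)
    (hf : ContDiffOn ℝ 1 f (Set.Ioc 0 x₀))
    (hB : IntegrableOn (fun x => (deriv f x) ^ 2 * x ^ (-2 * s)) (Set.Ioc 0 x₀))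
    (hA : IntegrableOn (fun x => (f x) ^ 2 * x ^ (-2 * s - 2)) (Set.Ioc 0 x₀))
    (ε : ℝ) (hε : 0 < ε) (hεx : ε ≤ x₀) :
    (s + 1) * ∫ x in Set.Ioc ε x₀, (f x) ^ 2 * x ^ (-2 * s - 2) ≤
      s⁻¹ * (∫ x in Set.Ioc 0 x₀, (deriv f x) ^ 2 * x ^ (-2 * s))
        + (f ε) ^ 2 * ε ^ (-2 * s - 1) := by
  have hsub : Set.Ioc ε x₀ ⊆ Set.Ioc 0 x₀ := Set.Ioc_subset_Ioc_left hε.le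
  -- positivity on the set
  have hpos : ∀ x ∈ Set.Ioc ε x₀, 0 < x := fun x hx => lt_trans hε hx.1
  -- the function g and its derivative
  set g : ℝ → ℝ := fun x => (f x) ^ 2 * x ^ (-2 * s - 1) with hg
  set g' : ℝ → ℝ := fun x =>
    2 * f x * deriv f x * x ^ (-2 * s - 1) + (f x) ^ 2 * ((-2 * s - 1) * x ^ (-2 * s - 2)) with hg'
  -- f has derivative at interior points
  have hfd : ∀ x ∈ Set.Ioo (0:ℝ) x₀, HasDerivAt f (deriv f x) x := by
    intro x hx
    have h1 : Set.Ioc 0 x₀ ∈ nhds x := by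
      exact Filter.mem_of_superset (isOpen_Ioo.mem_nhds hx) Set.Ioo_subset_Ioc_self
    exact ((hf.contDiffAt h1).differentiableAt one_ne_zero).hasDerivAt
  have hderiv : ∀ x ∈ Set.Ioo ε x₀, HasDerivAt g (g' x) x := by
    intro x hx
    have hx0 : (0:ℝ) < x := hε.trans hx.1
    have h1 : HasDerivAt (fun y => (f y) ^ 2) (2 * f x * deriv f x)
        x := by
      have := (hfd x ⟨hx0, hx.2⟩).fun_pow 2
      simpa using this
    have h2 : HasDerivAt (fun y : ℝ => y ^ (-2 * s - 1))
        ((-2 * s - 1) * x ^ (-2 * s - 2)) x := by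
      have h := Real.hasDerivAt_rpow_const (x := x) (p := -2 * s - 1) (Or.inl hx0.ne')
      rw [show (-2 * s - 1) - 1 = -2 * s - 2 from by ring] at h
      exact h
    exact h1.mul h2
  -- continuity of g on Icc
  have hcont : ContinuousOn g (Set.Icc ε x₀) := by
    have hIcc : Set.Icc ε x₀ ⊆ Set.Ioc 0 x₀ :=
      fun x hx => ⟨hε.trans_le hx.1, hx.2⟩
    apply ContinuousOn.mul
    · exact ((hf.continuousOn.mono hIcc).pow 2)
    · apply ContinuousOn.rpow_const continuousOn_id
      intro x hx
      exact Or.inl (hε.trans_le hx.1).ne'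
  -- measurability bits
  have hmf : AEStronglyMeasurable f (volume.restrict (Set.Ioc ε x₀)) :=
    (hf.continuousOn.mono hsub).aestronglyMeasurable measurableSet_Ioc
  have hmrpow : ∀ p : ℝ, AEStronglyMeasurable (fun x : ℝ => x ^ p)
      (volume.restrict (Set.Ioc ε x₀)) := by
    intro p
    apply ContinuousOn.aestronglyMeasurable _ measurableSet_Ioc
    apply ContinuousOn.rpow_const continuousOn_id
    intro x hx
    exact Or.inl (hpos x hx).ne'
  have hmd : AEStronglyMeasurable (deriv f) (volume.restrict (Set.Ioc ε x₀)) :=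
    (measurable_deriv f).aestronglyMeasurable
  -- pointwise AM-GM bound for the cross term
  have hptwise : ∀ x ∈ Set.Ioc ε x₀,
      ‖2 * f x * deriv f x * x ^ (-2 * s - 1)‖ ≤
        s * ((f x) ^ 2 * x ^ (-2 * s - 2)) + s⁻¹ * ((deriv f x) ^ 2 * x ^ (-2 * s)) := by
    intro x hx
    have hx0 : (0:ℝ) < x := hpos x hx
    have e1 : x ^ (-2 * s - 1) = x ^ (-2 * s - 2) * x := by
      rw [show -2 * s - 1 = (-2 * s - 2) + 1 from by ring, Real.rpow_add_one hx0.ne']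
    have e2 : x ^ (-2 * s) = x ^ (-2 * s - 2) * x ^ (2:ℝ) := by
      rw [← Real.rpow_add hx0]; congr 1; ring
    have hw : (0:ℝ) < x ^ (-2 * s - 2) := Real.rpow_pos_of_pos hx0 _
    rw [e1, e2, Real.norm_eq_abs]
    have habs : |2 * f x * deriv f x * (x ^ (-2 * s - 2) * x)| =
        2 * |f x| * |deriv f x| * (x ^ (-2 * s - 2) * x) := by
      rw [abs_mul, abs_mul, abs_mul, abs_mul]
      rw [abs_of_pos hw, abs_of_pos hx0]
      norm_num [mul_assoc]
    rw [habs]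
    have h1 : 2 * |f x| * |deriv f x| * x ≤ s * (f x)^2 + s⁻¹ * ((deriv f x)^2 * x ^ (2:ℝ)) := by
      have hx2 : x ^ (2:ℝ) = x * x := by
        rw [show (2:ℝ) = (2:ℕ) by norm_num, Real.rpow_natCast]; ring
      rw [hx2]
      have key : 2 * (s * x * (|f x| * |deriv f x|)) ≤ s ^ 2 * |f x| ^ 2 + x ^ 2 * |deriv f x| ^ 2 := by
        nlinarith [sq_nonneg (s * |f x| - x * |deriv f x|)]
      have key2 := mul_le_mul_of_nonneg_left key (inv_pos.mpr hs).le
      have e3 : s⁻¹ * (2 * (s * x * (|f x| * |deriv f x|))) = 2 * |f x| * |deriv f x| * x := by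
        field_simp
      have e4 : s⁻¹ * (s ^ 2 * |f x| ^ 2 + x ^ 2 * |deriv f x| ^ 2)
          = s * (f x) ^ 2 + s⁻¹ * ((deriv f x) ^ 2 * (x * x)) := by
        rw [← sq_abs (f x), ← sq_abs (deriv f x)]; field_simp
      linarith [key2, e3.symm.le, e4.le]
    calc 2 * |f x| * |deriv f x| * (x ^ (-2 * s - 2) * x)
        = (2 * |f x| * |deriv f x| * x) * x ^ (-2 * s - 2) := by ring
      _ ≤ (s * (f x)^2 + s⁻¹ * ((deriv f x)^2 * x ^ (2:ℝ))) * x ^ (-2 * s - 2) := by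
          exact mul_le_mul_of_nonneg_right h1 hw.le
      _ = s * ((f x) ^ 2 * x ^ (-2 * s - 2)) + s⁻¹ * ((deriv f x) ^ 2 * (x ^ (-2 * s - 2) * x ^ (2:ℝ))) := by ring
  -- integrability of the dominating function on Ioc ε x₀
  have hAε : IntegrableOn (fun x => (f x) ^ 2 * x ^ (-2 * s - 2)) (Set.Ioc ε x₀) :=
    hA.mono_set hsub
  have hBε : IntegrableOn (fun x => (deriv f x) ^ 2 * x ^ (-2 * s)) (Set.Ioc ε x₀) :=
    hB.mono_set hsub
  have hdom : IntegrableOn (fun x => s * ((f x) ^ 2 * x ^ (-2 * s - 2))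
      + s⁻¹ * ((deriv f x) ^ 2 * x ^ (-2 * s))) (Set.Ioc ε x₀) :=
    (hAε.const_mul s).add (hBε.const_mul s⁻¹)
  -- integrability of the cross term
  have hcross : IntegrableOn (fun x => 2 * f x * deriv f x * x ^ (-2 * s - 1)) (Set.Ioc ε x₀) := by
    apply Integrable.mono' hdom
    · exact (((aestronglyMeasurable_const.mul hmf).mul hmd).mul (hmrpow _))
    · rw [ae_restrict_iff' measurableSet_Ioc]
      exact Filter.Eventually.of_forall hptwise
  have hterm2 : IntegrableOn (fun x => (f x) ^ 2 * ((-2 * s - 1) * x ^ (-2 * s - 2)))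
      (Set.Ioc ε x₀) := by
    have : (fun x => (f x) ^ 2 * ((-2 * s - 1) * x ^ (-2 * s - 2))) =
        fun x => (-2 * s - 1) * ((f x) ^ 2 * x ^ (-2 * s - 2)) := by
      funext x; ring
    rw [this]
    exact hAε.const_mul _
  have hint : IntervalIntegrable g' volume ε x₀ := by
    rw [intervalIntegrable_iff_integrableOn_Ioc_of_le hεx]
    exact hcross.add hterm2
  -- FTC
  have hFTC : ∫ y in ε..x₀, g' y = g x₀ - g ε :=
    intervalIntegral.integral_eq_sub_of_hasDerivAt_of_le hεx hcont hderiv hint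
  rw [intervalIntegral.integral_of_le hεx] at hFTC
  -- split the integral
  have hsplit : ∫ y in Set.Ioc ε x₀, g' y =
      (∫ y in Set.Ioc ε x₀, 2 * f y * deriv f y * y ^ (-2 * s - 1))
        + ∫ y in Set.Ioc ε x₀, (f y) ^ 2 * ((-2 * s - 1) * y ^ (-2 * s - 2)) :=
    integral_add hcross hterm2
  have hterm2val : ∫ y in Set.Ioc ε x₀, (f y) ^ 2 * ((-2 * s - 1) * y ^ (-2 * s - 2)) =
      (-2 * s - 1) * ∫ y in Set.Ioc ε x₀, (f y) ^ 2 * y ^ (-2 * s - 2) := by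
    rw [← integral_const_mul]
    congr 1; funext y; ring
  -- bound the cross term integral
  have hcrossbound : (∫ y in Set.Ioc ε x₀, 2 * f y * deriv f y * y ^ (-2 * s - 1)) ≤
      s * (∫ y in Set.Ioc ε x₀, (f y) ^ 2 * y ^ (-2 * s - 2))
        + s⁻¹ * (∫ y in Set.Ioc 0 x₀, (deriv f y) ^ 2 * y ^ (-2 * s)) := by
    have h1 : (∫ y in Set.Ioc ε x₀, 2 * f y * deriv f y * y ^ (-2 * s - 1)) ≤
        ∫ y in Set.Ioc ε x₀, (s * ((f y) ^ 2 * y ^ (-2 * s - 2))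
          + s⁻¹ * ((deriv f y) ^ 2 * y ^ (-2 * s))) := by
      apply setIntegral_mono_on hcross hdom measurableSet_Ioc
      intro x hx
      have h := hptwise x hx
      rw [Real.norm_eq_abs] at h
      exact (le_abs_self _).trans h
    have h2 : ∫ y in Set.Ioc ε x₀, (s * ((f y) ^ 2 * y ^ (-2 * s - 2))
          + s⁻¹ * ((deriv f y) ^ 2 * y ^ (-2 * s))) =
        s * (∫ y in Set.Ioc ε x₀, (f y) ^ 2 * y ^ (-2 * s - 2))
          + s⁻¹ * (∫ y in Set.Ioc ε x₀, (deriv f y) ^ 2 * y ^ (-2 * s)) := by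
      rw [integral_add (hAε.const_mul s) (hBε.const_mul s⁻¹), integral_const_mul, integral_const_mul]
    have h3 : (∫ y in Set.Ioc ε x₀, (deriv f y) ^ 2 * y ^ (-2 * s)) ≤
        ∫ y in Set.Ioc 0 x₀, (deriv f y) ^ 2 * y ^ (-2 * s) := by
      apply setIntegral_mono_set hB
      · rw [Filter.EventuallyLE, ae_restrict_iff' measurableSet_Ioc]
        apply Filter.Eventually.of_forall
        intro x hx
        have hx0 : (0:ℝ) < x := hx.1
        positivity
      · exact Filter.Eventually.of_forall hsub
    have := h1.trans (h2.le)
    nlinarith [inv_pos.mpr hs]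
  -- g x₀ ≥ 0
  have hgx₀ : 0 ≤ g x₀ := by
    have : (0:ℝ) < x₀ ^ (-2 * s - 1) := Real.rpow_pos_of_pos hx₀ _
    positivity
  -- put it together
  have key : g x₀ - g ε ≤ s * (∫ y in Set.Ioc ε x₀, (f y) ^ 2 * y ^ (-2 * s - 2))
        + s⁻¹ * (∫ y in Set.Ioc 0 x₀, (deriv f y) ^ 2 * y ^ (-2 * s))
        + (-2 * s - 1) * ∫ y in Set.Ioc ε x₀, (f y) ^ 2 * y ^ (-2 * s - 2) := by
    rw [← hFTC, hsplit, hterm2val]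
    linarith
  have hgε : g ε = (f ε) ^ 2 * ε ^ (-2 * s - 1) := rfl
  nlinarith [key, hgx₀]

/-- Carleman-type weight inequality on `(0, x₀]` with weight `x^{−2s}`, `s > 2`:
`∫ |f'|² x^{−2s} ≥ C⁻¹ s² ∫ |f|² x^{−2s−2}` for a universal constant `C > 0`, provided `f`
vanishes to infinite order at `0` and the integrals converge. -/
theorem stmt_3 :
    ∃ C > 0, ∀ (s x₀ : ℝ), 2 < s → 0 < x₀ → ∀ f : ℝ → ℝ,
      ContDiffOn ℝ 1 f (Set.Ioc 0 x₀) →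
      (∀ N : ℕ, Asymptotics.IsBigO (nhdsWithin 0 (Set.Ioi 0)) f (fun x => x ^ N)) →
      IntegrableOn (fun x => (deriv f x) ^ 2 * x ^ (-2 * s)) (Set.Ioc 0 x₀) →
      IntegrableOn (fun x => (f x) ^ 2 * x ^ (-2 * s - 2)) (Set.Ioc 0 x₀) →
      (∫ x in Set.Ioc 0 x₀, (deriv f x) ^ 2 * x ^ (-2 * s)) ≥
        C⁻¹ * s ^ 2 * ∫ x in Set.Ioc 0 x₀, (f x) ^ 2 * x ^ (-2 * s - 2) := by
  refine ⟨1, one_pos, ?_⟩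
  intro s x₀ hs hx₀ f hf hbig hB hA
  have hs0 : (0:ℝ) < s := by linarith
  set A : ℝ := ∫ x in Set.Ioc 0 x₀, (f x) ^ 2 * x ^ (-2 * s - 2) with hAdef
  set B : ℝ := ∫ x in Set.Ioc 0 x₀, (deriv f x) ^ 2 * x ^ (-2 * s) with hBdef
  have hA0 : 0 ≤ A := by
    apply setIntegral_nonneg measurableSet_Ioc
    intro x hx
    have hx0 : (0:ℝ) < x := hx.1
    positivity
  -- the sequence of cutoffs
  set ε : ℕ → ℝ := fun n => x₀ / (n + 1) with hεdef
  have hεpos : ∀ n, 0 < ε n := by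
    intro n
    apply div_pos hx₀
    positivity
  have hεle : ∀ n, ε n ≤ x₀ := by
    intro n
    apply div_le_self hx₀.le
    have : (0:ℝ) ≤ (n:ℝ) := Nat.cast_nonneg n
    linarith
  -- key inequality for each n
  have key : ∀ n : ℕ, (s + 1) * ∫ x in Set.Ioc (ε n) x₀, (f x) ^ 2 * x ^ (-2 * s - 2) ≤
      s⁻¹ * B + (f (ε n)) ^ 2 * (ε n) ^ (-2 * s - 1) :=
    fun n => aux_key s x₀ hs0 hx₀ f hf hB hA (ε n) (hεpos n) (hεle n)
  -- the cutoff integrals tend to A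
  have hmono : Monotone (fun n : ℕ => Set.Ioc (ε n) x₀) := by
    intro m n hmn
    apply Set.Ioc_subset_Ioc_left
    show x₀ / ((n:ℝ) + 1) ≤ x₀ / ((m:ℝ) + 1)
    have hc : (m:ℝ) ≤ n := Nat.cast_le.mpr hmn
    rw [div_le_div_iff₀ (by positivity) (by positivity)]
    nlinarith [hx₀.le]
  have hunion : (⋃ n : ℕ, Set.Ioc (ε n) x₀) = Set.Ioc 0 x₀ := by
    ext x
    simp only [Set.mem_iUnion, Set.mem_Ioc]
    constructor
    · rintro ⟨n, h1, h2⟩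
      exact ⟨(hεpos n).trans h1, h2⟩
    · rintro ⟨h1, h2⟩
      obtain ⟨n, hn⟩ := exists_nat_gt (x₀ / x)
      refine ⟨n, ?_, h2⟩
      rw [div_lt_iff₀ (by positivity)]
      rw [div_lt_iff₀ h1] at hn
      nlinarith
  have hAn : Filter.Tendsto (fun n : ℕ => ∫ x in Set.Ioc (ε n) x₀, (f x) ^ 2 * x ^ (-2 * s - 2))
      Filter.atTop (nhds A) := by
    have := tendsto_setIntegral_of_monotone (fun n : ℕ => measurableSet_Ioc) hmono
      (by rw [hunion]; exact hA)
    rwa [hunion] at this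
  -- the boundary term tends to 0
  have hbd : Filter.Tendsto (fun x : ℝ => (f x) ^ 2 * x ^ (-2 * s - 1))
      (nhdsWithin 0 (Set.Ioi 0)) (nhds 0) := by
    set N : ℕ := ⌈s⌉₊ + 1 with hNdef
    have hNs : s + 1 ≤ (N : ℝ) := by
      have := Nat.le_ceil s
      push_cast [hNdef]
      linarith
    obtain ⟨c, hc⟩ := (hbig N).isBigOWith
    rw [Asymptotics.isBigOWith_iff] at hc
    apply squeeze_zero'
    · filter_upwards [self_mem_nhdsWithin] with x hx
      have hx0 : (0:ℝ) < x := hx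
      positivity
    · have h1 : ∀ᶠ x : ℝ in nhdsWithin 0 (Set.Ioi 0), x < 1 := by
        apply eventually_nhdsWithin_of_eventually_nhds
        have : Set.Iio (1:ℝ) ∈ nhds (0:ℝ) := Iio_mem_nhds one_pos
        filter_upwards [this] with x hx using hx
      filter_upwards [hc, h1, self_mem_nhdsWithin] with x hcx hx1 hx
      have hx0 : (0:ℝ) < x := hx
      have h2 : (f x) ^ 2 ≤ c ^ 2 * x ^ (2 * N) := by
        have h3 : ‖f x‖ ≤ |c| * ‖x ^ N‖ := hcx.trans (by
          have := abs_nonneg (x ^ N)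
          rw [Real.norm_eq_abs]
          nlinarith [le_abs_self c, abs_nonneg (x ^ N)])
        have h4 := mul_self_le_mul_self (norm_nonneg (f x)) h3
        rw [Real.norm_eq_abs, Real.norm_eq_abs] at h4
        calc (f x) ^ 2 = |f x| * |f x| := by rw [← abs_mul, abs_mul_self]; ring
          _ ≤ |c| * |x ^ N| * (|c| * |x ^ N|) := h4
          _ = c ^ 2 * (x ^ N) ^ 2 := by rw [← sq_abs c, ← sq_abs (x ^ N)]; ring
          _ = c ^ 2 * x ^ (2 * N) := by rw [← pow_mul]; ring_nf
      calc (f x) ^ 2 * x ^ (-2 * s - 1) ≤ c ^ 2 * x ^ (2 * N) * x ^ (-2 * s - 1) := by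
            have : (0:ℝ) < x ^ (-2 * s - 1) := Real.rpow_pos_of_pos hx0 _
            exact mul_le_mul_of_nonneg_right h2 this.le
        _ = c ^ 2 * x ^ ((2 * N : ℝ) + (-2 * s - 1)) := by
            rw [mul_assoc, ← Real.rpow_natCast x (2 * N), ← Real.rpow_add hx0]
            push_cast
            ring_nf
        _ ≤ c ^ 2 * x ^ (1:ℝ) := by
            apply mul_le_mul_of_nonneg_left _ (sq_nonneg c)
            apply Real.rpow_le_rpow_of_exponent_ge hx0 hx1.le
            push_cast
            linarith [Nat.le_ceil s]
        _ = c ^ 2 * x := by rw [Real.rpow_one]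
    · have : Filter.Tendsto (fun x : ℝ => c ^ 2 * x) (nhds 0) (nhds (c ^ 2 * 0)) :=
        (continuous_const.mul continuous_id).tendsto 0
      rw [mul_zero] at this
      exact this.mono_left nhdsWithin_le_nhds
  have hεtend : Filter.Tendsto ε Filter.atTop (nhdsWithin 0 (Set.Ioi 0)) := by
    apply tendsto_nhdsWithin_of_tendsto_nhds_of_eventually_within
    · have h1 := (tendsto_const_div_atTop_nhds_zero_nat x₀).comp (Filter.tendsto_add_atTop_nat 1)
      apply h1.congr
      intro n
      simp only [Function.comp_apply, hεdef]
      push_cast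
      ring
    · exact Filter.Eventually.of_forall fun n => hεpos n
  have hbd2 : Filter.Tendsto (fun n : ℕ => (f (ε n)) ^ 2 * (ε n) ^ (-2 * s - 1))
      Filter.atTop (nhds 0) := hbd.comp hεtend
  -- take the limit
  have hlim : (s + 1) * A ≤ s⁻¹ * B + 0 := by
    apply le_of_tendsto_of_tendsto' (hAn.const_mul (s + 1))
      ((tendsto_const_nhds).add hbd2) key
  have hsi : s * s⁻¹ = 1 := mul_inv_cancel₀ hs0.ne'
  rw [add_zero] at hlim
  have h5 := mul_le_mul_of_nonneg_left hlim hs0.le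
  have h6 : s * (s⁻¹ * B) = B := by rw [← mul_assoc, hsi, one_mul]
  rw [h6] at h5
  rw [inv_one]
  nlinarith [h5, mul_nonneg hs0.le hA0, hs]
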